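/- The sequence of functions J_n : A_n → ℝ defined by J_n(p‖r) = ∑_{i : p_i > 0} p_i log(1/r_i) satisfies the measurability-in-second-argument, symmetry, and chain rule properties, but does not satisfy the vanishing property: there exist n and p ∈ Δ_n with J_n(p‖p) ≠ 0. -/

import Mathlib

open Finset MeasureTheory

/-- `p` is a probability distribution on `{1, …, n}` (i.e. `p ∈ Δₙ`). -/
def IsDist {n : ℕ} (p : Fin n → ℝ) : Prop :=
  (∀ i, 0 ≤ p i) ∧ ∑ i, p i = 1

/-- `(p, r) ∈ Aₙ`: both are distributions and `p` is absolutely continuous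
with respect to `r`. -/
def RelPair {n : ℕ} (p r : Fin n → ℝ) : Prop :=
  IsDist p ∧ IsDist r ∧ ∀ i, r i = 0 → p i = 0

/-- Decomposition of a sigma type over `Fin (n + 1)`. -/
def sigmaFinSuccEquiv {n : ℕ} (k : Fin (n + 1) → ℕ) :
    (Σ i : Fin (n + 1), Fin (k i)) ≃ (Fin (k 0) ⊕ Σ i : Fin n, Fin (k i.succ)) where
  toFun x :=
    Fin.cases (motive := fun i => Fin (k i) → Fin (k 0) ⊕ Σ i : Fin n, Fin (k i.succ))
      (fun j => Sum.inl j) (fun i j => Sum.inr ⟨i, j⟩) x.1 x.2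
  invFun y := y.elim (fun j => ⟨0, j⟩) fun x => ⟨x.1.succ, x.2⟩
  left_inv := by rintro ⟨i, j⟩; induction i using Fin.cases <;> rfl
  right_inv := by rintro (j | ⟨i, j⟩) <;> rfl

/-- The lexicographic equivalence `(Σ i : Fin n, Fin (k i)) ≃ Fin (k 1 + ⋯ + k n)`,
sending `(i, j)` to `k 1 + ⋯ + k (i - 1) + j`. -/
def finSigmaEquiv : ∀ {n : ℕ} (k : Fin n → ℕ), (Σ i : Fin n, Fin (k i)) ≃ Fin (∑ i, k i)
  | 0, _ => (Equiv.equivOfIsEmpty _ (Fin 0)).trans (finCongr (by simp))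
  | n + 1, k =>
      (sigmaFinSuccEquiv k).trans <|
        ((Equiv.refl (Fin (k 0))).sumCongr (finSigmaEquiv fun i => k i.succ)).trans <|
          finSumFinEquiv.trans (finCongr (Fin.sum_univ_succ k).symm)

/-- The composite distribution
`w ∘ (p¹, …, pⁿ) = (w₁p¹₁, …, w₁p¹_{k₁}, …, wₙpⁿ₁, …, wₙpⁿ_{kₙ}) ∈ Δ_{k₁+⋯+kₙ}`. -/
def comp {n : ℕ} (k : Fin n → ℕ) (w : Fin n → ℝ)
    (p : ∀ i, Fin (k i) → ℝ) : Fin (∑ i, k i) → ℝ :=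
  fun j => w ((finSigmaEquiv k).symm j).1 * p _ ((finSigmaEquiv k).symm j).2

/-- Symmetry: `I(p ‖ r) = I(pσ ‖ rσ)` for every permutation `σ`,
where `(pσ)ᵢ = p_{σ(i)}`. -/
def SymmRel (I : ∀ n : ℕ, (Fin n → ℝ) → (Fin n → ℝ) → ℝ) : Prop :=
  ∀ (n : ℕ) (p r : Fin n → ℝ) (σ : Equiv.Perm (Fin n)),
    RelPair p r → I n p r = I n (p ∘ σ) (r ∘ σ)

/-- Vanishing: `I(p ‖ p) = 0`. -/
def Vanishing (I : ∀ n : ℕ, (Fin n → ℝ) → (Fin n → ℝ) → ℝ) : Prop :=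
  ∀ (n : ℕ) (p : Fin n → ℝ), IsDist p → I n p p = 0

/-- The chain rule:
`I(w∘(p¹,…,pⁿ) ‖ w̃∘(p̃¹,…,p̃ⁿ)) = I(w ‖ w̃) + ∑ᵢ wᵢ I(pⁱ ‖ p̃ⁱ)`. -/
def ChainRule (I : ∀ n : ℕ, (Fin n → ℝ) → (Fin n → ℝ) → ℝ) : Prop :=
  ∀ (n : ℕ) (k : Fin n → ℕ) (w w' : Fin n → ℝ) (p p' : ∀ i, Fin (k i) → ℝ),
    RelPair w w' → (∀ i, RelPair (p i) (p' i)) →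
    I (∑ i, k i) (comp k w p) (comp k w' p') =
      I n w w' + ∑ i, w i * I (k i) (p i) (p' i)

/-- Lebesgue measurability of `r ↦ I(p ‖ r)` on `{r ∈ Δₙ : (p, r) ∈ Aₙ}`
(null-measurability with respect to Lebesgue measure restricted to that set). -/
def MeasurableSecond (I : ∀ n : ℕ, (Fin n → ℝ) → (Fin n → ℝ) → ℝ) : Prop :=
  ∀ (n : ℕ) (p : Fin n → ℝ), IsDist p →
    NullMeasurable (fun r => I n p r) (volume.restrict {r | RelPair p r})

/-- The quantity `J(p ‖ r) = ∑_{i : pᵢ > 0} pᵢ log (1 / rᵢ)`. -/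
noncomputable def Jent : ∀ n : ℕ, (Fin n → ℝ) → (Fin n → ℝ) → ℝ :=
  fun _ p r => ∑ i, if 0 < p i then p i * Real.log (1 / r i) else 0

lemma chain_inner {m : ℕ} (wi wi' : ℝ) (hwi : 0 ≤ wi) (hwi' : 0 ≤ wi')
    (habs : wi' = 0 → wi = 0) (q q' : Fin m → ℝ) (hq : IsDist q)
    (habs2 : ∀ j, q' j = 0 → q j = 0) (hq'0 : ∀ j, 0 ≤ q' j) :
    ∑ j, (if 0 < wi * q j then wi * q j * Real.log (1 / (wi' * q' j)) else 0)
      = (if 0 < wi then wi * Real.log (1 / wi') else 0)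
        + wi * ∑ j, (if 0 < q j then q j * Real.log (1 / q' j) else 0) := by
  by_cases hw : 0 < wi
  · have hw' : 0 < wi' := by
      rcases hwi'.lt_or_eq with h | h
      · exact h
      · exact absurd (habs h.symm) hw.ne'
    have key : ∀ j, (if 0 < wi * q j then wi * q j * Real.log (1 / (wi' * q' j)) else 0)
        = wi * q j * Real.log (1 / wi')
          + wi * (if 0 < q j then q j * Real.log (1 / q' j) else 0) := by
      intro j
      by_cases hqj : 0 < q j
      · have hq'j : 0 < q' j := by
          rcases (hq'0 j).lt_or_eq with h | h
          · exact h
          · exact absurd (habs2 j h.symm) hqj.ne'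
        have hpos : 0 < wi * q j := mul_pos hw hqj
        rw [if_pos hpos, if_pos hqj]
        have : (1 : ℝ) / (wi' * q' j) = (1 / wi') * (1 / q' j) := by
          field_simp
        rw [this, Real.log_mul (one_div_ne_zero hw'.ne') (one_div_ne_zero hq'j.ne')]
        ring
      · have hqj0 : q j = 0 := le_antisymm (not_lt.1 hqj) (hq.1 j)
        simp [hqj0, hqj]
    rw [Finset.sum_congr rfl (fun j _ => key j), Finset.sum_add_distrib, if_pos hw,
      ← Finset.mul_sum]
    congr 1
    have : ∑ j, wi * q j * Real.log (1 / wi')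
        = (wi * Real.log (1 / wi')) * ∑ j, q j := by
      rw [Finset.mul_sum]; apply Finset.sum_congr rfl; intro j _; ring
    rw [this, hq.2, mul_one]
  · have hw0 : wi = 0 := le_antisymm (not_lt.1 hw) hwi
    simp [hw0]

/-- `J` satisfies measurability in the second argument, symmetry and the chain
rule, but not vanishing. -/
theorem J_counterexample :
    MeasurableSecond Jent ∧ SymmRel Jent ∧ ChainRule Jent ∧
      ∃ (n : ℕ) (p : Fin n → ℝ), IsDist p ∧ Jent n p p ≠ 0 := by
  refine ⟨?_, ?_, ?_, ?_⟩
  · -- measurability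
    intro n p _
    apply Measurable.nullMeasurable
    apply Finset.measurable_sum
    intro i _
    by_cases h : 0 < p i
    · simp only [if_pos h]
      exact (Real.measurable_log.comp
        (Measurable.const_div (measurable_pi_apply i) 1)).const_mul _
    · simp only [if_neg h]
      exact measurable_const
  · -- symmetry
    intro n p r σ _
    exact (Fintype.sum_equiv σ _ _ (fun i => rfl)).symm
  · -- chain rule
    intro n k w w' p p' hww hpp
    have e := finSigmaEquiv k
    calc Jent (∑ i, k i) (comp k w p) (comp k w' p')
        = ∑ x : Σ i : Fin n, Fin (k i),
            (if 0 < comp k w p (finSigmaEquiv k x) then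
              comp k w p (finSigmaEquiv k x) *
                Real.log (1 / comp k w' p' (finSigmaEquiv k x)) else 0) := by
          exact (Fintype.sum_equiv (finSigmaEquiv k) _ _ (fun x => rfl)).symm
      _ = ∑ i : Fin n, ∑ j : Fin (k i),
            (if 0 < w i * p i j then w i * p i j * Real.log (1 / (w' i * p' i j))
              else 0) := by
          rw [← Finset.univ_sigma_univ, Finset.sum_sigma]
          apply Finset.sum_congr rfl; intro i _
          apply Finset.sum_congr rfl; intro j _
          have hx : (finSigmaEquiv k).symm ((finSigmaEquiv k) (⟨i, j⟩ : Σ i, Fin (k i)))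
              = ⟨i, j⟩ := Equiv.symm_apply_apply _ _
          have hc : ∀ (v : Fin n → ℝ) (q : ∀ i, Fin (k i) → ℝ) (x : Σ i, Fin (k i)),
              comp k v q (finSigmaEquiv k x) = v x.1 * q x.1 x.2 := by
            intro v q x; simp only [comp]; rw [Equiv.symm_apply_apply]
          simp only [hc]
      _ = ∑ i : Fin n, ((if 0 < w i then w i * Real.log (1 / w' i) else 0)
            + w i * ∑ j, (if 0 < p i j then p i j * Real.log (1 / p' i j) else 0)) := by
          apply Finset.sum_congr rfl; intro i _
          exact chain_inner (w i) (w' i) (hww.1.1 i) (hww.2.1.1 i) (hww.2.2 i)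
            (p i) (p' i) (hpp i).1 ((hpp i).2.2) ((hpp i).2.1.1)
      _ = Jent n w w' + ∑ i, w i * Jent (k i) (p i) (p' i) := by
          rw [Finset.sum_add_distrib]; rfl
  · -- non-vanishing
    refine ⟨2, fun _ => 1 / 2, ⟨fun i => by norm_num, by norm_num [Fin.sum_univ_two]⟩, ?_⟩
    have : Jent 2 (fun _ => 1 / 2) (fun _ => 1 / 2)
        = Real.log 2 := by
      norm_num [Jent, Fin.sum_univ_two]
      ring
    rw [this]
    exact (Real.log_pos (by norm_num)).ne'
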